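/- There is no compact metrizable dynamical system (E, U) such that every rotation R_g : 𝕋 → 𝕋, g ∈ 𝕋, of the circle is a factor of (E, U). -/

import Mathlib

open Filter MeasureTheory AddCircle Topology

private lemma fourier_nat_pow (n : ℕ) (x : AddCircle (1:ℝ)) :
    fourier (n : ℤ) x = ((toCircle x : ℂ)) ^ n := by
  induction n with
  | zero => simp
  | succ k ih =>
      push_cast
      rw [fourier_add, ih, fourier_one, pow_succ]

private lemma no_convergent_powers (φ : ℕ → ℕ) (hφ : StrictMono φ) :
    ¬ ∀ g : Circle, ∃ l : Circle, Tendsto (fun k => g ^ φ k) atTop (𝓝 l) := by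
  intro h
  set m : ℕ → ℕ := fun k => φ (k + 1) - φ k with hm
  have hmpos : ∀ k, 0 < m k := fun k => Nat.sub_pos_of_lt (hφ (Nat.lt_succ_self k))
  have hφadd : ∀ k, φ (k + 1) = φ k + m k := fun k =>
    (Nat.add_sub_cancel' (hφ (Nat.lt_succ_self k)).le).symm
  -- for every g, g ^ m k → 1
  have key : ∀ g : Circle, Tendsto (fun k => g ^ m k) atTop (𝓝 1) := by
    intro g
    obtain ⟨l, hl⟩ := h g
    have h1 : Tendsto (fun k => g ^ φ (k + 1)) atTop (𝓝 l) :=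
      hl.comp (tendsto_add_atTop_nat 1)
    have h2 : Tendsto (fun k => g ^ φ (k + 1) * (g ^ φ k)⁻¹) atTop (𝓝 (l * l⁻¹)) :=
      h1.mul hl.inv
    rw [mul_inv_cancel] at h2
    convert h2 using 2 with k
    rw [hφadd k, pow_add]
    group
  haveI : Fact (0 < (1:ℝ)) := ⟨one_pos⟩
  -- pointwise convergence of fourier (m k) to 1 on AddCircle 1
  have hpt : ∀ x : AddCircle (1:ℝ),
      Tendsto (fun k => fourier ((m k : ℕ) : ℤ) x) atTop (𝓝 (1 : ℂ)) := by
    intro x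
    have := key (toCircle x)
    have h2 : Tendsto (fun k => ((toCircle x ^ m k : Circle) : ℂ)) atTop (𝓝 ((1 : Circle) : ℂ)) :=
      (continuous_subtype_val.tendsto _).comp this
    simp only [fourier_nat_pow]
    convert h2 using 2 with k <;> simp
  -- each integral vanishes
  have hint : ∀ k, ∫ x : AddCircle (1:ℝ), fourier ((m k : ℕ) : ℤ) x ∂haarAddCircle = 0 := by
    intro k
    have hn : ((m k : ℕ) : ℤ) ≠ 0 := by exact_mod_cast (hmpos k).ne'
    exact integral_eq_zero_of_add_right_eq_neg (μ := haarAddCircle)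
      (fourier_add_half_inv_index hn one_pos)
  -- dominated convergence
  have hdom : Tendsto (fun k => ∫ x : AddCircle (1:ℝ), fourier ((m k : ℕ) : ℤ) x ∂haarAddCircle)
      atTop (𝓝 (∫ _ : AddCircle (1:ℝ), (1 : ℂ) ∂haarAddCircle)) := by
    refine tendsto_integral_of_dominated_convergence (fun _ => 1)
      (fun k => (fourier (T := (1:ℝ)) ((m k : ℕ) : ℤ)).continuous.aestronglyMeasurable)
      (integrable_const 1) (fun k => ?_) ?_
    · exact Eventually.of_forall fun x => le_of_eq (Circle.norm_coe _)
    · exact Eventually.of_forall hpt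
  rw [integral_const] at hdom
  simp only [measure_univ, ENNReal.toReal_one, probReal_univ, one_smul] at hdom
  simp only [hint] at hdom
  exact zero_ne_one (tendsto_nhds_unique tendsto_const_nhds hdom)

theorem no_compact_metrizable_common_extension_of_rotations :
    ∀ (E : Type*) [TopologicalSpace E] [CompactSpace E]
      [TopologicalSpace.MetrizableSpace E] (U : E → E), Continuous U →
      ¬ ∀ g : Circle, ∃ π : E → Circle, Continuous π ∧ Function.Surjective π ∧
          (fun x => g * x) ∘ π = π ∘ U := by
  intro E _ _ _ U hU h
  -- E is nonempty since it surjects onto Circle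
  obtain ⟨π₁, hπ₁c, hπ₁s, hπ₁⟩ := h 1
  obtain ⟨x₀, -⟩ := hπ₁s 1
  letI := TopologicalSpace.metrizableSpaceMetric E
  -- extract a convergent subsequence of U^[k] x₀
  obtain ⟨y, -, φ, hφ, hconv⟩ :=
    IsCompact.tendsto_subseq (x := fun k => U^[k] x₀) isCompact_univ (fun n => trivial)
  refine no_convergent_powers φ hφ ?_
  intro g
  obtain ⟨π, hπc, hπs, hπ⟩ := h g
  have hiter : ∀ n x, π (U^[n] x) = g ^ n * π x := by
    intro n
    induction n with
    | zero => simp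
    | succ k ih =>
        intro x
        rw [Function.iterate_succ_apply', ← Function.comp_apply (f := π) (g := U), ← hπ]
        simp [ih x, pow_succ]
        group
  refine ⟨π y * (π x₀)⁻¹, ?_⟩
  have h1 : Tendsto (fun k => π (U^[φ k] x₀)) atTop (𝓝 (π y)) :=
    (hπc.tendsto y).comp hconv
  have h2 : Tendsto (fun k => π (U^[φ k] x₀) * (π x₀)⁻¹) atTop (𝓝 (π y * (π x₀)⁻¹)) :=
    h1.mul tendsto_const_nhds
  convert h2 using 2 with k
  rw [hiter (φ k) x₀]
  group
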